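/- Let 𝒞 ⊂ ℝⁿ be open, bounded and convex, and F ∈ H²(ℝⁿ + i𝒞). Fix k ∈ {1,...,n}, fix θ_j ∈ ℝ for j ≠ k, and let K ⊂ 𝒞 be compact. Then sup_{λ ∈ K} |F(θ₁,...,θ_k,...,θ_n + iλ)| → 0 as |θ_k| → ∞. -/

import Mathlib

open MeasureTheory Complex Metric Set Real Filter
open scoped ENNReal

/-- The tube `𝒯 = ℝⁿ + i𝒞 ⊂ ℂⁿ` over a base `𝒞 ⊂ ℝⁿ`. -/
def tube {n : ℕ} (C : Set (Fin n → ℝ)) : Set (Fin n → ℂ) :=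
  {ζ : Fin n → ℂ | (fun i => (ζ i).im) ∈ C}

/-- The horizontal slice `F_λ(θ) = F(θ + iλ)` of a function on a tube. -/
noncomputable def tubeSlice {n : ℕ} (F : (Fin n → ℂ) → ℂ) (lam : Fin n → ℝ) :
    (Fin n → ℝ) → ℂ :=
  fun θ => F fun i => (θ i : ℂ) + (lam i : ℂ) * Complex.I

/-- The Hardy norm `‖F‖ = sup_{λ ∈ 𝒞} ‖F(·+iλ)‖_{L²(ℝⁿ)}` (valued in `ℝ≥0∞`). -/
noncomputable def hardyNorm {n : ℕ} (C : Set (Fin n → ℝ)) (F : (Fin n → ℂ) → ℂ) : ℝ≥0∞ :=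
  ⨆ lam ∈ C, eLpNorm (tubeSlice F lam) 2 (volume : Measure (Fin n → ℝ))

/-- Membership in the Hardy space `H²(ℝⁿ + i𝒞)`. -/
def MemHardy {n : ℕ} (C : Set (Fin n → ℝ)) (F : (Fin n → ℂ) → ℂ) : Prop :=
  DifferentiableOn ℂ F (tube C) ∧
    (∀ lam ∈ C, MemLp (tubeSlice F lam) 2 (volume : Measure (Fin n → ℝ))) ∧
    hardyNorm C F < ⊤

section Aux

lemma claim1 {U : Set ℂ} (hU : IsOpen U) {φ : ℂ → ℂ} (hφ : DifferentiableOn ℂ φ U)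
    {c : ℂ} {r : ℝ} (hball : closedBall c r ⊆ U) {s : ℝ} (hs0 : 0 < s) (hsr : s ≤ r) :
    2 * π * ‖(φ c) ^ 2‖ ≤ ∫ θ in (0 : ℝ)..(2 * π), ‖(φ (circleMap c s θ)) ^ 2‖ := by
  set ψ : ℂ → ℂ := fun w => (φ w) ^ 2 with hψ
  have hsub : closedBall c s ⊆ U := (closedBall_subset_closedBall hsr).trans hball
  have hψd : DifferentiableOn ℂ ψ U := fun x hx => ((hφ x hx).pow 2)
  have key := circleIntegral_sub_center_inv_smul_of_differentiable_on_off_countable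
    (f := ψ) (c := c) (R := s) hs0 Set.countable_empty
    (hψd.continuousOn.mono hsub)
    (fun z hz => (hψd.differentiableAt (hU.mem_nhds (hsub (ball_subset_closedBall hz.1)))))
  have h1 : ‖(2 * π * I : ℂ) • ψ c‖ = 2 * π * ‖ψ c‖ := by
    simp [norm_smul, Complex.norm_I, abs_of_pos Real.pi_pos, mul_assoc]
  calc 2 * π * ‖ψ c‖ = ‖(2 * π * I : ℂ) • ψ c‖ := h1.symm
    _ = ‖∮ z in C(c, s), (z - c)⁻¹ • ψ z‖ := by rw [key]
    _ ≤ ∫ θ in (0:ℝ)..(2*π), ‖deriv (circleMap c s) θ • (circleMap c s θ - c)⁻¹ • ψ (circleMap c s θ)‖ := by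
        apply intervalIntegral.norm_integral_le_integral_norm
        positivity
    _ = ∫ θ in (0:ℝ)..(2*π), ‖ψ (circleMap c s θ)‖ := by
        apply intervalIntegral.integral_congr
        intro θ _
        simp [norm_smul, deriv_circleMap, circleMap_sub_center, abs_of_pos hs0,
          norm_circleMap_zero]
        field_simp

lemma claim2 {U : Set ℂ} (hU : IsOpen U) {φ : ℂ → ℂ} (hφ : DifferentiableOn ℂ φ U)
    {g₁ : ℂ → ℝ≥0∞} (hg₁ : Measurable g₁) (hgeq : ∀ w ∈ U, g₁ w = (‖φ w‖₊ : ℝ≥0∞) ^ 2)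
    {c : ℂ} {r : ℝ} (hball : closedBall c r ⊆ U) {s : ℝ} (hs0 : 0 < s) (hsr : s ≤ r) :
    ENNReal.ofReal (2 * π) * (‖φ c‖₊ : ℝ≥0∞) ^ 2 ≤ ∫⁻ θ in Set.Ioo (-π) π, g₁ (circleMap c s θ) := by
  have hmem : ∀ θ : ℝ, circleMap c s θ ∈ U := fun θ => hball <|
    (closedBall_subset_closedBall hsr) (circleMap_mem_closedBall c hs0.le θ)
  have hcont : Continuous fun θ : ℝ => (φ (circleMap c s θ)) ^ 2 := by
    have : Continuous fun θ : ℝ => φ (circleMap c s θ) :=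
      (hφ.continuousOn).comp_continuous (continuous_circleMap c s) hmem
    exact this.pow 2
  -- periodic shift
  have hper : Function.Periodic (fun θ : ℝ => ‖(φ (circleMap c s θ)) ^ 2‖) (2 * π) :=
    fun θ => by simp [periodic_circleMap c s θ]
  have h0 : (∫ θ in (0:ℝ)..(2*π), ‖(φ (circleMap c s θ)) ^ 2‖)
      = ∫ θ in (-π)..π, ‖(φ (circleMap c s θ)) ^ 2‖ := by
    have h := hper.intervalIntegral_add_eq (t := 0) (s := -π)
    rw [show (0:ℝ) + 2*π = 2*π by ring, show (-π) + 2*π = π by ring] at h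
    exact h
  have hle := claim1 hU hφ hball hs0 hsr
  rw [h0] at hle
  have hIoc : (∫ θ in (-π)..π, ‖(φ (circleMap c s θ)) ^ 2‖)
      = ∫ θ in Set.Ioc (-π) π, ‖(φ (circleMap c s θ)) ^ 2‖ := by
    rw [intervalIntegral.integral_of_le (by linarith [Real.pi_pos])]
  have hInt : IntegrableOn (fun θ : ℝ => ‖(φ (circleMap c s θ)) ^ 2‖) (Set.Ioc (-π) π) := by
    exact (hcont.norm.integrableOn_Ioc)
  have hofReal : ENNReal.ofReal (∫ θ in Set.Ioc (-π) π, ‖(φ (circleMap c s θ)) ^ 2‖)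
      = ∫⁻ θ in Set.Ioc (-π) π, (‖(φ (circleMap c s θ)) ^ 2‖₊ : ℝ≥0∞) := by
    rw [MeasureTheory.ofReal_integral_eq_lintegral_ofReal hInt
      (Filter.Eventually.of_forall fun _ => norm_nonneg _)]
    congr 1
    ext θ
    exact ofReal_norm _
  have hIooIoc : (∫⁻ θ in Set.Ioc (-π) π, (‖(φ (circleMap c s θ)) ^ 2‖₊ : ℝ≥0∞))
      = ∫⁻ θ in Set.Ioo (-π) π, (‖(φ (circleMap c s θ)) ^ 2‖₊ : ℝ≥0∞) := by
    rw [Measure.restrict_congr_set Ioo_ae_eq_Ioc]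
  have hcongr : (∫⁻ θ in Set.Ioo (-π) π, (‖(φ (circleMap c s θ)) ^ 2‖₊ : ℝ≥0∞))
      = ∫⁻ θ in Set.Ioo (-π) π, g₁ (circleMap c s θ) := by
    apply setLIntegral_congr_fun_ae measurableSet_Ioo
    exact Filter.Eventually.of_forall fun θ _ => by
      rw [hgeq _ (hmem θ), nnnorm_pow, ENNReal.coe_pow]
  calc ENNReal.ofReal (2 * π) * (‖φ c‖₊ : ℝ≥0∞) ^ 2
      = ENNReal.ofReal (2 * π * ‖(φ c) ^ 2‖) := by
        rw [norm_pow]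
        conv_rhs => rw [ENNReal.ofReal_mul (by positivity : (0:ℝ) ≤ 2 * π),
          ENNReal.ofReal_pow (norm_nonneg _), ofReal_norm]
        rfl
    _ ≤ ENNReal.ofReal (∫ θ in Set.Ioc (-π) π, ‖(φ (circleMap c s θ)) ^ 2‖) := by
        apply ENNReal.ofReal_le_ofReal; rw [← hIoc]; exact hle
    _ = _ := by rw [hofReal, hIooIoc, hcongr]

lemma lemmaA {U : Set ℂ} (hU : IsOpen U) {φ : ℂ → ℂ} (hφ : DifferentiableOn ℂ φ U)
    {g₁ : ℂ → ℝ≥0∞} (hg₁ : Measurable g₁) (hgeq : ∀ w ∈ U, g₁ w = (‖φ w‖₊ : ℝ≥0∞) ^ 2)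
    {c : ℂ} {r : ℝ} (hr : 0 < r) (hball : closedBall c r ⊆ U) :
    ENNReal.ofReal (π * r ^ 2) * (‖φ c‖₊ : ℝ≥0∞) ^ 2 ≤ ∫⁻ w in closedBall c r, g₁ w := by
  classical
  set e := Complex.measurableEquivRealProd
  set s₀ : Set (ℝ × ℝ) := Set.Ioo 0 r ×ˢ Set.Ioo (-π) π with hs₀def
  have hs₀ : MeasurableSet s₀ := measurableSet_Ioo.prod measurableSet_Ioo
  set q : ℝ × ℝ → ℝ≥0∞ := fun x => g₁ (c + e.symm x) with hq
  have hqm : Measurable q := hg₁.comp (measurable_const.add e.symm.measurable)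
  -- the point identity
  have hpoint : ∀ p : ℝ × ℝ, c + e.symm (polarCoord.symm p) = circleMap c p.1 p.2 := by
    intro p
    rw [polarCoord_symm_apply]
    show c + Complex.mk (p.1 * Real.cos p.2) (p.1 * Real.sin p.2) = _
    rw [Complex.mk_eq_add_mul_I, circleMap, Complex.exp_mul_I]
    push_cast
    ring
  -- translation + transfer to ℝ²
  have step1 : (∫⁻ w in closedBall c r, g₁ w)
      = ∫⁻ x in e.symm ⁻¹' closedBall (0 : ℂ) r, q x := by
    have h1 : (∫⁻ w in closedBall (0:ℂ) r, g₁ (c + w)) = ∫⁻ w in closedBall c r, g₁ w := by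
      have hmp : MeasurePreserving (fun w : ℂ => c + w) volume volume :=
        measurePreserving_add_left volume c
      have hemb : MeasurableEmbedding (fun w : ℂ => c + w) :=
        (Homeomorph.addLeft c).measurableEmbedding
      have hpre : (fun w : ℂ => c + w) ⁻¹' closedBall c r = closedBall 0 r := by
        ext w
        simp [Metric.mem_closedBall, Complex.dist_eq, add_sub_cancel_left]
      rw [← hpre]
      exact hmp.setLIntegral_comp_preimage_emb hemb g₁ (closedBall c r)
    have h2 : (∫⁻ x in e.symm ⁻¹' closedBall (0:ℂ) r, q x)
        = ∫⁻ w in closedBall (0:ℂ) r, g₁ (c + w) := by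
      have hmp : MeasurePreserving (e.symm : ℝ × ℝ → ℂ) volume volume :=
        Complex.volume_preserving_equiv_real_prod.symm
      exact hmp.setLIntegral_comp_preimage_emb e.symm.measurableEmbedding
        (fun w => g₁ (c + w)) (closedBall 0 r)
    rw [h2, h1]
  -- image of polar rectangle sits inside the ball-preimage
  have himg : polarCoord.symm '' s₀ ⊆ e.symm ⁻¹' closedBall (0 : ℂ) r := by
    rintro x ⟨p, hp, rfl⟩
    have habs : ‖e.symm (polarCoord.symm p)‖ = |p.1| := by
      have : e.symm (polarCoord.symm p) = Complex.polarCoord.symm p := by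
        rw [polarCoord_symm_apply, Complex.polarCoord_symm_apply]
        show Complex.mk (p.1 * Real.cos p.2) (p.1 * Real.sin p.2) = _
        rw [Complex.mk_eq_add_mul_I]
        push_cast
        ring
      rw [this, Complex.norm_polarCoord_symm]
    simp only [Set.mem_preimage, Metric.mem_closedBall, Complex.dist_eq, sub_zero]
    rw [habs, abs_of_pos hp.1.1]
    exact hp.1.2.le
  -- Jacobian change of variables
  have hderiv : ∀ p ∈ s₀, HasFDerivWithinAt polarCoord.symm
      ((LinearMap.toContinuousLinearMap (Matrix.toLin (Module.Basis.finTwoProd ℝ) (Module.Basis.finTwoProd ℝ)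
        !![Real.cos p.2, -p.1 * Real.sin p.2; Real.sin p.2, p.1 * Real.cos p.2]))) s₀ p :=
    fun p _ => (hasFDerivAt_polarCoord_symm p).hasFDerivWithinAt
  have hinj : Set.InjOn polarCoord.symm s₀ := by
    apply polarCoord.symm.injOn.mono
    rw [polarCoord.symm_source, polarCoord_target]
    exact Set.prod_mono (Set.Ioo_subset_Ioi_self) le_rfl
  have hjac := lintegral_image_eq_lintegral_abs_det_fderiv_mul volume hs₀ hderiv hinj q
  have hdet : ∀ p ∈ s₀, ENNReal.ofReal
      |(LinearMap.toContinuousLinearMap (Matrix.toLin (Module.Basis.finTwoProd ℝ) (Module.Basis.finTwoProd ℝ)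
        !![Real.cos p.2, -p.1 * Real.sin p.2; Real.sin p.2, p.1 * Real.cos p.2])).det|
        * q (polarCoord.symm p) = ENNReal.ofReal p.1 * q (polarCoord.symm p) := by
    intro p hp
    congr 1
    have : (LinearMap.toContinuousLinearMap (Matrix.toLin (Module.Basis.finTwoProd ℝ)
        (Module.Basis.finTwoProd ℝ)
        !![Real.cos p.2, -p.1 * Real.sin p.2; Real.sin p.2, p.1 * Real.cos p.2])).det = p.1 := by
      conv_rhs => rw [← one_mul p.1, ← Real.cos_sq_add_sin_sq p.2]
      simp only [LinearMap.det_toContinuousLinearMap, LinearMap.det_toLin,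
        Matrix.det_fin_two_of, neg_mul, sub_neg_eq_add]
      ring
    rw [this, abs_of_pos hp.1.1]
  -- put everything together
  have hpolarm : Measurable (polarCoord.symm : ℝ × ℝ → ℝ × ℝ) := by
    have hfun : (polarCoord.symm : ℝ × ℝ → ℝ × ℝ)
        = fun p => (p.1 * Real.cos p.2, p.1 * Real.sin p.2) := funext polarCoord_symm_apply
    rw [hfun]
    exact (measurable_fst.mul (Real.measurable_cos.comp measurable_snd)).prodMk
      (measurable_fst.mul (Real.measurable_sin.comp measurable_snd))
  have hXm : Measurable fun p : ℝ × ℝ => ENNReal.ofReal p.1 * q (polarCoord.symm p) := by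
    apply (ENNReal.measurable_ofReal.comp measurable_fst).mul
    exact hqm.comp hpolarm
  have hjac2 : (∫⁻ x in polarCoord.symm '' s₀, q x)
      = ∫⁻ p in s₀, ENNReal.ofReal p.1 * q (polarCoord.symm p) := by
    rw [hjac]
    exact setLIntegral_congr_fun_ae hs₀ (Filter.Eventually.of_forall hdet)
  have hfub : (∫⁻ p in s₀, ENNReal.ofReal p.1 * q (polarCoord.symm p))
      = ∫⁻ a in Set.Ioo 0 r, ∫⁻ b in Set.Ioo (-π) π,
          ENNReal.ofReal a * q (polarCoord.symm (a, b)) := by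
    rw [hs₀def, Measure.volume_eq_prod, ← Measure.prod_restrict]
    exact lintegral_prod _ hXm.aemeasurable
  have hinner : ∀ a ∈ Set.Ioo 0 r,
      ENNReal.ofReal (2 * π) * (‖φ c‖₊ : ℝ≥0∞) ^ 2
        ≤ ∫⁻ b in Set.Ioo (-π) π, q (polarCoord.symm (a, b)) := by
    intro a ha
    have := claim2 hU hφ hg₁ hgeq hball ha.1 ha.2.le
    refine this.trans (le_of_eq ?_)
    apply setLIntegral_congr_fun_ae measurableSet_Ioo
    exact Filter.Eventually.of_forall fun b _ => by rw [hq]; simp only; rw [hpoint (a, b)]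
  have hioo : (∫⁻ a in Set.Ioo 0 r, ENNReal.ofReal a) = ENNReal.ofReal (r ^ 2 / 2) := by
    rw [← MeasureTheory.ofReal_integral_eq_lintegral_ofReal]
    · congr 1
      rw [Measure.restrict_congr_set Ioo_ae_eq_Ioc, ← intervalIntegral.integral_of_le hr.le]
      rw [integral_id]
      ring
    · exact (intervalIntegrable_iff_integrableOn_Ioo_of_le hr.le).1 (continuous_id.intervalIntegrable _ _)
    · exact (ae_restrict_iff' measurableSet_Ioo).2
        (Filter.Eventually.of_forall fun a ha => ha.1.le)
  calc ENNReal.ofReal (π * r ^ 2) * (‖φ c‖₊ : ℝ≥0∞) ^ 2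
      = ENNReal.ofReal (r ^ 2 / 2) * (ENNReal.ofReal (2 * π) * (‖φ c‖₊ : ℝ≥0∞) ^ 2) := by
        rw [← mul_assoc, ← ENNReal.ofReal_mul (by positivity)]
        congr 2
        ring
    _ = ∫⁻ a in Set.Ioo 0 r, ENNReal.ofReal a * (ENNReal.ofReal (2 * π) * (‖φ c‖₊ : ℝ≥0∞) ^ 2) := by
        rw [lintegral_mul_const _ ENNReal.measurable_ofReal, hioo]
    _ ≤ ∫⁻ a in Set.Ioo 0 r, ENNReal.ofReal a * ∫⁻ b in Set.Ioo (-π) π, q (polarCoord.symm (a, b)) := by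
        apply setLIntegral_mono' measurableSet_Ioo
        intro a ha
        exact mul_le_mul_right (hinner a ha) _
    _ = ∫⁻ a in Set.Ioo 0 r, ∫⁻ b in Set.Ioo (-π) π, ENNReal.ofReal a * q (polarCoord.symm (a, b)) := by
        apply lintegral_congr
        intro a
        rw [lintegral_const_mul]
        exact hqm.comp (hpolarm.comp (measurable_const.prodMk measurable_id))
    _ = ∫⁻ x in polarCoord.symm '' s₀, q x := (hjac2.trans hfub).symm
    _ ≤ ∫⁻ x in e.symm ⁻¹' closedBall (0 : ℂ) r, q x :=
        lintegral_mono' (Measure.restrict_mono himg le_rfl) le_rfl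
    _ = ∫⁻ w in closedBall c r, g₁ w := step1.symm


lemma lemmaB {n : ℕ} {U : Set (Fin n → ℂ)} (hU : IsOpen U)
    {F : (Fin n → ℂ) → ℂ} (hF : DifferentiableOn ℂ F U)
    {g : (Fin n → ℂ) → ℝ≥0∞} (hg : Measurable g)
    (hgeq : ∀ z ∈ U, g z = (‖F z‖₊ : ℝ≥0∞) ^ 2)
    (c₀ : Fin n → ℂ) {r : ℝ} (hr : 0 < r)
    (hsub : Set.pi Set.univ (fun i => closedBall (c₀ i) r) ⊆ U) :
    ∀ (s : Finset (Fin n)) (c : Fin n → ℂ),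
      (∀ i, c i ∈ closedBall (c₀ i) r) → (∀ i ∈ s, c i = c₀ i) →
      (ENNReal.ofReal (π * r ^ 2)) ^ s.card * (‖F c‖₊ : ℝ≥0∞) ^ 2
        ≤ (∫⋯∫⁻_s, (Set.pi Set.univ (fun i => closedBall (c₀ i) r)).indicator g
            ∂(fun _ => (volume : Measure ℂ))) c := by
  classical
  set P : Set (Fin n → ℂ) := Set.pi Set.univ (fun i => closedBall (c₀ i) r) with hP
  have hPmeas : MeasurableSet P := MeasurableSet.univ_pi fun i => measurableSet_closedBall
  have hfmeas : Measurable (P.indicator g) := hg.indicator hPmeas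
  intro s
  induction s using Finset.induction_on with
  | empty =>
      intro c hc1 _
      have hcP : c ∈ P := fun i _ => hc1 i
      rw [lmarginal_empty]
      simp only [Finset.card_empty, pow_zero, one_mul]
      rw [Set.indicator_of_mem hcP, hgeq c (hsub hcP)]
  | @insert i s hi ih =>
      intro c hc1 hc2
      have hci : c i = c₀ i := hc2 i (Finset.mem_insert_self i s)
      rw [lmarginal_insert _ hfmeas hi]
      -- restrict the outer integral to the closed ball
      have hstep1 : (∫⁻ xᵢ in closedBall (c₀ i) r,
            (∫⋯∫⁻_s, P.indicator g ∂(fun _ => (volume : Measure ℂ))) (Function.update c i xᵢ))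
          ≤ ∫⁻ xᵢ, (∫⋯∫⁻_s, P.indicator g ∂(fun _ => (volume : Measure ℂ)))
              (Function.update c i xᵢ) ∂volume :=
        setLIntegral_le_lintegral _ _
      -- pointwise bound inside the ball, from the induction hypothesis
      have hstep2 : ∀ xᵢ ∈ closedBall (c₀ i) r,
          (ENNReal.ofReal (π * r ^ 2)) ^ s.card * g (Function.update c i xᵢ)
            ≤ (∫⋯∫⁻_s, P.indicator g ∂(fun _ => (volume : Measure ℂ)))
                (Function.update c i xᵢ) := by
        intro xᵢ hxᵢ
        have hmem : ∀ j, Function.update c i xᵢ j ∈ closedBall (c₀ j) r := by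
          intro j
          rcases eq_or_ne j i with rfl | hj
          · simpa using hxᵢ
          · simpa [Function.update_of_ne hj] using hc1 j
        have heq : ∀ j ∈ s, Function.update c i xᵢ j = c₀ j := by
          intro j hj
          have hji : j ≠ i := fun h => hi (h ▸ hj)
          rw [Function.update_of_ne hji]
          exact hc2 j (Finset.mem_insert_of_mem hj)
        have := ih (Function.update c i xᵢ) hmem heq
        refine le_trans (le_of_eq ?_) this
        congr 1
        rw [hgeq _ (hsub fun j _ => hmem j)]
      -- Lemma A in variable i
      have hupdate_diff : DifferentiableOn ℂ (fun w : ℂ => F (Function.update c i w))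
          {w : ℂ | Function.update c i w ∈ U} := by
        have hud : Differentiable ℂ (fun w : ℂ => Function.update c i w) := by
          rw [differentiable_pi]
          intro j
          rcases eq_or_ne j i with rfl | hj
          · simpa using differentiable_id
          · simpa [Function.update_of_ne hj] using differentiable_const (c j)
        exact hF.comp hud.differentiableOn (fun w hw => hw)
      have hopen : IsOpen {w : ℂ | Function.update c i w ∈ U} := by
        have : Continuous (fun w : ℂ => Function.update c i w) := by
          apply continuous_pi
          intro j
          rcases eq_or_ne j i with rfl | hj
          · simpa using continuous_id'
          · simpa [Function.update_of_ne hj] using continuous_const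
        exact hU.preimage this
      have hball : closedBall (c i) r ⊆ {w : ℂ | Function.update c i w ∈ U} := by
        intro w hw
        apply hsub
        intro j _
        rcases eq_or_ne j i with rfl | hj
        · simpa using (hci ▸ hw)
        · simpa [Function.update_of_ne hj] using hc1 j
      have hA := lemmaA hopen hupdate_diff
        (hg.comp (measurable_pi_lambda _ (fun j => by
          rcases eq_or_ne j i with rfl | hj
          · simpa using measurable_id'
          · simpa [Function.update_of_ne hj] using measurable_const)))
        (fun w hw => hgeq _ hw) hr hball
      rw [Function.update_eq_self] at hA
      -- combine
      calc (ENNReal.ofReal (π * r ^ 2)) ^ (insert i s).card * (‖F c‖₊ : ℝ≥0∞) ^ 2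
          = (ENNReal.ofReal (π * r ^ 2)) ^ s.card
              * (ENNReal.ofReal (π * r ^ 2) * (‖F c‖₊ : ℝ≥0∞) ^ 2) := by
            rw [Finset.card_insert_of_notMem hi, pow_succ]
            ring
        _ ≤ (ENNReal.ofReal (π * r ^ 2)) ^ s.card
              * ∫⁻ w in closedBall (c i) r, g (Function.update c i w) := by
            exact mul_le_mul_right hA _
        _ = ∫⁻ w in closedBall (c i) r,
              (ENNReal.ofReal (π * r ^ 2)) ^ s.card * g (Function.update c i w) := by
            rw [lintegral_const_mul]
            exact hg.comp (measurable_pi_lambda _ (fun j => by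
              rcases eq_or_ne j i with rfl | hj
              · simpa using measurable_id'
              · simpa [Function.update_of_ne hj] using measurable_const))
        _ ≤ ∫⁻ xᵢ in closedBall (c₀ i) r,
              (∫⋯∫⁻_s, P.indicator g ∂(fun _ => (volume : Measure ℂ)))
                (Function.update c i xᵢ) := by
            rw [hci]
            exact setLIntegral_mono' measurableSet_closedBall hstep2
        _ ≤ _ := hstep1

end Aux

/-- a Hardy space function `F ∈ H²(ℝⁿ + i𝒞)` decays in any single variable:
for fixed `k`, fixed real values of the other variables, and any compact `K ⊂ 𝒞`,
`sup_{λ ∈ K} |F(θ₁,…,θ_k,…,θ_n + iλ)| → 0` as `|θ_k| → ∞`. -/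
theorem statement8 {n : ℕ} (C : Set (Fin n → ℝ))
    (hCopen : IsOpen C) (hCbdd : Bornology.IsBounded C) (hCconv : Convex ℝ C)
    (F : (Fin n → ℂ) → ℂ) (hF : MemHardy C F)
    (k : Fin n) (θ₀ : Fin n → ℝ)
    (K : Set (Fin n → ℝ)) (hK : IsCompact K) (hKC : K ⊆ C) :
    ∀ ε : ℝ, 0 < ε → ∃ R : ℝ, ∀ t : ℝ, R ≤ |t| → ∀ lam ∈ K,
      ‖F fun i => ((Function.update θ₀ k t) i : ℂ) + (lam i : ℂ) * Complex.I‖ ≤ ε := by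
  classical
  obtain ⟨hFdiff, hFslice, hFnorm⟩ := hF
  intro ε hε
  have htube : IsOpen (tube C) :=
    hCopen.preimage (continuous_pi fun i => Complex.continuous_im.comp (continuous_apply i))
  -- the global measurable majorant
  set g : (Fin n → ℂ) → ℝ≥0∞ := (tube C).indicator (fun z => (‖F z‖₊ : ℝ≥0∞) ^ 2) with hgdef
  have hcontOn : ContinuousOn (fun z : Fin n → ℂ => (‖F z‖₊ : ℝ≥0∞) ^ 2) (tube C) := by
    apply (ENNReal.continuous_pow 2).comp_continuousOn
    exact ENNReal.continuous_coe.comp_continuousOn hFdiff.continuousOn.nnnorm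
  have hgmeas : Measurable g := by
    apply measurable_of_Ioi
    intro y
    have hset : g ⁻¹' Set.Ioi y
        = tube C ∩ ((fun z : Fin n → ℂ => (‖F z‖₊ : ℝ≥0∞) ^ 2) ⁻¹' Set.Ioi y) := by
      ext z
      by_cases hz : z ∈ tube C
      · simp [hgdef, Set.indicator_of_mem hz, hz]
      · simp [hgdef, Set.indicator_of_notMem hz, hz, Set.mem_Ioi]
    rw [hset]
    exact (hcontOn.isOpen_inter_preimage htube isOpen_Ioi).measurableSet
  have hgeq : ∀ z ∈ tube C, g z = (‖F z‖₊ : ℝ≥0∞) ^ 2 := fun z hz =>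
    Set.indicator_of_mem hz _
  -- choose the radius r
  obtain ⟨δ, hδpos, hδ⟩ := hK.exists_thickening_subset_open hCopen hKC
  set r : ℝ := δ / 2 with hrdef
  have hr : 0 < r := by positivity
  -- slice bound
  set M : ℝ≥0∞ := hardyNorm C F with hMdef
  have hMne : M ≠ ⊤ := hFnorm.ne
  have hsliceInt : ∀ m ∈ C,
      (∫⁻ θ : Fin n → ℝ, (‖tubeSlice F m θ‖₊ : ℝ≥0∞) ^ 2) ≤ M ^ 2 := by
    intro m hm
    have h1 : eLpNorm (tubeSlice F m) 2 volume ≤ M := by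
      rw [hMdef, hardyNorm]
      exact le_iSup₂ (f := fun lam _ => eLpNorm (tubeSlice F lam) 2 volume) m hm
    have h2 : (∫⁻ θ, (‖tubeSlice F m θ‖₊ : ℝ≥0∞) ^ 2)
        = (eLpNorm (tubeSlice F m) 2 volume) ^ 2 := by
      rw [eLpNorm_eq_lintegral_rpow_enorm_toReal (by norm_num) (by norm_num)]
      rw [ENNReal.toReal_ofNat]
      rw [← ENNReal.rpow_natCast _ 2, ← ENNReal.rpow_mul]
      norm_num
      rfl
    rw [h2]
    exact pow_le_pow_left' h1 2
  -- the measurable equivalence ℂⁿ ≃ ℝⁿ × ℝⁿ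
  set e : ℂ ≃ᵐ ℝ × ℝ := Complex.measurableEquivRealProd with hedef
  set E : (Fin n → ℂ) ≃ᵐ ((Fin n → ℝ) × (Fin n → ℝ)) :=
    (MeasurableEquiv.piCongrRight (fun _ : Fin n => e)).trans
      (MeasurableEquiv.arrowProdEquivProdArrow ℝ ℝ (Fin n)) with hEdef
  have hE : MeasurePreserving E volume volume := by
    have h1 : MeasurePreserving (fun (a : Fin n → ℂ) (i : Fin n) => e (a i)) volume volume :=
      volume_preserving_pi fun _ => Complex.volume_preserving_equiv_real_prod
    have h2 := volume_measurePreserving_arrowProdEquivProdArrow ℝ ℝ (Fin n)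
    exact h2.comp h1
  have hEsymm : ∀ (p : (Fin n → ℝ) × (Fin n → ℝ)) (i : Fin n),
      (E.symm p) i = (p.1 i : ℂ) + (p.2 i : ℂ) * Complex.I := by
    intro p i
    show Complex.mk (p.1 i) (p.2 i) = _
    rw [Complex.mk_eq_add_mul_I]
  have hEim : ∀ (p : (Fin n → ℝ) × (Fin n → ℝ)), (fun i => ((E.symm p) i).im) = p.2 := by
    intro p
    funext i
    rw [hEsymm]
    simp
  -- finiteness of the integral of g
  have hCvol : volume C < ⊤ := hCbdd.measure_lt_top
  have hgint : (∫⁻ z, g z) ≤ M ^ 2 * volume C := by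
    have h1 : (∫⁻ z, g z ∂(volume : Measure (Fin n → ℂ)))
        = ∫⁻ p, g (E.symm p) ∂(volume : Measure ((Fin n → ℝ) × (Fin n → ℝ))) :=
      ((hE.symm E).lintegral_comp_emb E.symm.measurableEmbedding g).symm
    rw [h1, Measure.volume_eq_prod,
      lintegral_prod_symm (fun p => g (E.symm p))
        (hgmeas.comp E.symm.measurable).aemeasurable]
    have h3 : ∀ m : Fin n → ℝ, (∫⁻ s : Fin n → ℝ, g (E.symm (s, m)))
        ≤ C.indicator (fun _ => M ^ 2) m := by
      intro m
      by_cases hm : m ∈ C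
      · rw [Set.indicator_of_mem hm]
        have : ∀ s : Fin n → ℝ, g (E.symm (s, m)) = (‖tubeSlice F m s‖₊ : ℝ≥0∞) ^ 2 := by
          intro s
          have hmem : E.symm (s, m) ∈ tube C := by
            show (fun i => ((E.symm (s, m)) i).im) ∈ C
            rw [hEim (s, m)]
            exact hm
          rw [hgeq _ hmem, show E.symm (s, m) = fun i => ((s i : ℂ) + (m i : ℂ) * Complex.I)
            from funext (hEsymm (s, m))]
          rfl
        rw [lintegral_congr this]
        exact hsliceInt m hm
      · rw [Set.indicator_of_notMem hm]
        have : ∀ s : Fin n → ℝ, g (E.symm (s, m)) = 0 := by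
          intro s
          apply Set.indicator_of_notMem
          show ¬ ((fun i => ((E.symm (s, m)) i).im) ∈ C)
          rw [hEim (s, m)]
          exact hm
        rw [lintegral_congr this]
        simp
    calc (∫⁻ m, ∫⁻ s : Fin n → ℝ, g (E.symm (s, m)))
        ≤ ∫⁻ m, C.indicator (fun _ => M ^ 2) m := lintegral_mono h3
      _ = M ^ 2 * volume C := by
          rw [lintegral_indicator_const hCopen.measurableSet]
    done
  have hgfin : (∫⁻ z, g z) ≠ ⊤ :=
    (hgint.trans_lt (ENNReal.mul_lt_top (by simp [ENNReal.pow_lt_top, hMne.lt_top])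
      hCvol)).ne
  -- the tail integrals
  set A : ℕ → Set (Fin n → ℂ) := fun N => {z | (N : ℝ) ≤ |(z k).re|} with hAdef
  have hAmeas : ∀ N, MeasurableSet (A N) := fun N =>
    measurableSet_le measurable_const
      ((Complex.measurable_re.comp (measurable_pi_apply k)).abs)
  set T : ℕ → ℝ≥0∞ := fun N => ∫⁻ z, (A N).indicator g z with hTdef
  have hT0 : Filter.Tendsto T Filter.atTop (nhds 0) := by
    have hlim : ∀ z : Fin n → ℂ, Filter.Tendsto (fun N => (A N).indicator g z)
        Filter.atTop (nhds 0) := by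
      intro z
      obtain ⟨N₀, hN₀⟩ := exists_nat_gt |(z k).re|
      apply Filter.Tendsto.congr' (f₁ := fun _ => (0 : ℝ≥0∞))
      · filter_upwards [Filter.eventually_ge_atTop N₀] with N hN
        have hnot : ¬ ((N : ℝ) ≤ |(z k).re|) := by
          push_neg
          calc |(z k).re| < N₀ := hN₀
            _ ≤ N := by exact_mod_cast hN
        exact (Set.indicator_of_notMem (show z ∉ A N from hnot) g).symm
      · exact tendsto_const_nhds
    have h := tendsto_lintegral_of_dominated_convergence (μ := volume)
      (F := fun N => (A N).indicator g) (f := fun _ => 0) g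
      (fun N => hgmeas.indicator (hAmeas N))
      (fun N => Filter.Eventually.of_forall fun z => Set.indicator_le_self _ _ z)
      hgfin
      (Filter.Eventually.of_forall hlim)
    simpa using h
  -- choose N
  set V : ℝ≥0∞ := ENNReal.ofReal (π * r ^ 2) with hVdef
  have hVpos : 0 < V := ENNReal.ofReal_pos.2 (by positivity)
  have hVne : V ≠ ⊤ := ENNReal.ofReal_ne_top
  set ε' : ℝ≥0∞ := V ^ n * (ENNReal.ofReal ε) ^ 2 with hε'def
  have hε'pos : 0 < ε' := ENNReal.mul_pos (pow_ne_zero n hVpos.ne')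
    (pow_ne_zero 2 (ENNReal.ofReal_pos.2 hε).ne')
  obtain ⟨N, hN⟩ : ∃ N, T N < ε' := (hT0.eventually_lt_const hε'pos).exists
  refine ⟨N + r + 1, ?_⟩
  intro t ht lam hlam
  set c₀ : Fin n → ℂ := fun i => ((Function.update θ₀ k t i : ℝ) : ℂ) + (lam i : ℂ) * Complex.I
    with hc₀def
  have hc₀im : ∀ i, (c₀ i).im = lam i := by intro i; simp [hc₀def]
  have hc₀re : (c₀ k).re = t := by simp [hc₀def]
  -- the polydisc lies in the tube
  have hsub : Set.pi Set.univ (fun i => closedBall (c₀ i) r) ⊆ tube C := by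
    intro z hz
    apply hδ
    rw [Metric.mem_thickening_iff]
    refine ⟨lam, hlam, lt_of_le_of_lt ((dist_pi_le_iff hr.le).2 fun i => ?_) (by
      rw [hrdef]; linarith)⟩
    have h1 : dist (z i).im (lam i) = |((z i) - c₀ i).im| := by
      rw [Real.dist_eq, Complex.sub_im, hc₀im]
    rw [h1]
    calc |((z i) - c₀ i).im| ≤ ‖(z i) - c₀ i‖ := Complex.abs_im_le_norm _
      _ ≤ r := by
          have := hz i (Set.mem_univ i)
          rwa [Metric.mem_closedBall, Complex.dist_eq] at this
  -- apply Lemma B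
  have hB := lemmaB htube hFdiff hgmeas hgeq c₀ hr hsub Finset.univ c₀
    (fun i => Metric.mem_closedBall_self hr.le) (fun i _ => rfl)
  rw [← lintegral_eq_lmarginal_univ c₀] at hB
  rw [Finset.card_univ, Fintype.card_fin] at hB
  -- bound the right-hand side by the tail integral
  have hRB : (∫⁻ z, (Set.pi Set.univ (fun i => closedBall (c₀ i) r)).indicator g z
        ∂(Measure.pi fun _ : Fin n => (volume : Measure ℂ))) ≤ T N := by
    rw [← MeasureTheory.volume_pi]
    apply lintegral_mono
    intro z
    by_cases hzP : z ∈ Set.pi Set.univ (fun i => closedBall (c₀ i) r)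
    · rw [Set.indicator_of_mem hzP]
      have hzA : z ∈ A N := by
        show (N : ℝ) ≤ |(z k).re|
        have h1 : |(z k).re - t| ≤ r := by
          rw [← hc₀re, ← Complex.sub_re]
          calc |((z k) - c₀ k).re| ≤ ‖(z k) - c₀ k‖ := Complex.abs_re_le_norm _
            _ ≤ r := by
                have := hzP k (Set.mem_univ k)
                rwa [Metric.mem_closedBall, Complex.dist_eq] at this
        have h2 : |t| - |(z k).re| ≤ |t - (z k).re| := abs_sub_abs_le_abs_sub _ _
        rw [abs_sub_comm] at h1
        have hNt : (N : ℝ) + r + 1 ≤ |t| := ht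
        linarith
      rw [Set.indicator_of_mem hzA]
    · rw [Set.indicator_of_notMem hzP]
      exact zero_le
  have hfinal : V ^ n * (‖F c₀‖₊ : ℝ≥0∞) ^ 2 ≤ V ^ n * (ENNReal.ofReal ε) ^ 2 :=
    le_trans hB (le_trans hRB (le_trans hN.le le_rfl))
  have hsq : (‖F c₀‖₊ : ℝ≥0∞) ^ 2 ≤ (ENNReal.ofReal ε) ^ 2 :=
    (ENNReal.mul_le_mul_iff_right (pow_ne_zero n hVpos.ne') (ENNReal.pow_ne_top hVne)).1 hfinal
  have hreal : ‖F c₀‖ ^ 2 ≤ ε ^ 2 := by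
    have h1 := ENNReal.toReal_mono (ENNReal.pow_ne_top ENNReal.ofReal_ne_top) hsq
    rw [ENNReal.toReal_pow, ENNReal.toReal_pow, ENNReal.coe_toReal, coe_nnnorm,
      ENNReal.toReal_ofReal hε.le] at h1
    exact h1
  show ‖F c₀‖ ≤ ε
  nlinarith [norm_nonneg (F c₀), hε]
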